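/- (Lemma: vanishing pattern of the product ∏_{k≠ι}(r − r_{kk}I).) Let r be an upper triangular n×n complex matrix whose diagonal entries are pairwise distinct, and fix 1 ≤ ι ≤ n. Then the matrix P = ∏_{k≠ι}(r − r_{kk}·I) vanishes strictly to the left of the ι-th column and strictly below the ι-th row: P_{γμ} = 0 whenever μ < ι or γ > ι. -/

import Mathlib

/-- `M` is an upper triangular complex matrix. -/
def IsUT {n : ℕ} (M : Matrix (Fin n) (Fin n) ℂ) : Prop :=
  ∀ i j : Fin n, j < i → M i j = 0

lemma IsUT.mul' {n : ℕ} {A B : Matrix (Fin n) (Fin n) ℂ} (hA : IsUT A) (hB : IsUT B) :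
    IsUT (A * B) := by
  intro i j hji
  rw [Matrix.mul_apply]
  apply Finset.sum_eq_zero
  intro k _
  rcases lt_or_ge k i with hk | hk
  · rw [hA i k hk, zero_mul]
  · rw [hB k j (lt_of_lt_of_le hji hk), mul_zero]

lemma aeval_factor_apply {n : ℕ} (r : Matrix (Fin n) (Fin n) ℂ) (c : ℂ) (i j : Fin n) :
    (Polynomial.aeval r) (Polynomial.X - Polynomial.C c) i j
      = r i j - (if i = j then c else 0) := by
  rw [map_sub, Polynomial.aeval_X, Polynomial.aeval_C]
  simp [Matrix.sub_apply, Matrix.algebraMap_matrix_apply]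

lemma factor_UT {n : ℕ} {r : Matrix (Fin n) (Fin n) ℂ} (hr : IsUT r) (c : ℂ) :
    IsUT ((Polynomial.aeval r) (Polynomial.X - Polynomial.C c)) := by
  intro i j hji
  rw [aeval_factor_apply, hr i j hji, if_neg (ne_of_gt hji), sub_zero]

lemma prod_UT {n : ℕ} {r : Matrix (Fin n) (Fin n) ℂ} (hr : IsUT r) (S : Finset (Fin n)) :
    IsUT ((Polynomial.aeval r) (∏ k ∈ S, (Polynomial.X - Polynomial.C (r k k)))) := by
  classical
  induction S using Finset.induction with
  | empty =>
      intro i j hji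
      simp [Matrix.one_apply, (ne_of_lt hji).symm]
  | insert _ _ h ih =>
      rename_i a S
      rw [Finset.prod_insert h, map_mul]
      exact (factor_UT hr _).mul' ih

lemma key_vanish {n : ℕ} {r : Matrix (Fin n) (Fin n) ℂ} (hr : IsUT r) :
    ∀ (m : ℕ) (S : Finset (Fin n)), S.card = m → ∀ γ μ : Fin n, γ ≤ μ →
      (∀ k : Fin n, γ ≤ k → k ≤ μ → k ∈ S) →
      (Polynomial.aeval r) (∏ k ∈ S, (Polynomial.X - Polynomial.C (r k k))) γ μ = 0 := by
  classical
  intro m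
  induction m with
  | zero =>
      intro S hS γ μ hγμ hsub
      have : γ ∈ S := hsub γ le_rfl hγμ
      rw [Finset.card_eq_zero.mp hS] at this
      exact absurd this (Finset.notMem_empty γ)
  | succ m ih =>
      intro S hS γ μ hγμ hsub
      have hγS : γ ∈ S := hsub γ le_rfl hγμ
      rw [← Finset.mul_prod_erase S _ hγS, map_mul, Matrix.mul_apply]
      apply Finset.sum_eq_zero
      intro j _
      rcases lt_trichotomy j γ with h | h | h
      · rw [factor_UT hr _ γ j h, zero_mul]
      · subst h
        rw [aeval_factor_apply, if_pos rfl, sub_self, zero_mul]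
      · rcases le_or_gt j μ with hj | hj
        · have hcard : (S.erase γ).card = m := by
            rw [Finset.card_erase_of_mem hγS, hS]; rfl
          rw [ih (S.erase γ) hcard j μ hj
              (fun k hk1 hk2 => Finset.mem_erase.mpr
                ⟨ne_of_gt (lt_of_lt_of_le h hk1),
                 hsub k (le_of_lt (lt_of_lt_of_le h hk1)) hk2⟩),
            mul_zero]
        · rw [prod_UT hr (S.erase γ) j μ hj, mul_zero]

/-- Vanishing pattern of the product `P = ∏_{k ≠ ι} (r − r_{kk}·I)` for a regular
semisimple upper triangular matrix `r`: `P` vanishes strictly to the left of the `ι`-th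
column and strictly below the `ι`-th row, i.e. `P_{γμ} = 0` whenever `μ < ι` or
`γ > ι`. -/
theorem prod_shifted_vanishing_pattern
    (n : ℕ) (hn : 1 ≤ n)
    (r : Matrix (Fin n) (Fin n) ℂ) (hr : IsUT r)
    (hdist : ∀ i j : Fin n, i ≠ j → r i i ≠ r j j)
    (ι γ μ : Fin n) (hgm : μ < ι ∨ ι < γ) :
    ((Polynomial.aeval r)
        (∏ k ∈ Finset.univ.erase ι, (Polynomial.X - Polynomial.C (r k k)))) γ μ = 0 := by
  rcases le_or_gt γ μ with hγμ | hγμ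
  · apply key_vanish hr (Finset.univ.erase ι).card _ rfl γ μ hγμ
    intro k hk1 hk2
    refine Finset.mem_erase.mpr ⟨?_, Finset.mem_univ k⟩
    rcases hgm with h | h
    · exact ne_of_lt (lt_of_le_of_lt hk2 h)
    · exact ne_of_gt (lt_of_lt_of_le h hk1)
  · exact prod_UT hr _ γ μ hγμ
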